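/- In the three-candidate model, for a voter v ∈ P_1 and any normalized scoring rule (s_1, s_2, 0), the per-neighbor score-difference variable X (contribution to ŝ_v(a_1) − ŝ_v(a_2)) satisfies E[X] = (s_1 − s_2)·(p/(6p̂) − q/(6q̂)); in particular, under the monotone estimation error assumption p/p̂ ≥ q/q̂ and s_1 ≥ s_2, we have E[X] ≥ 0. -/

import Mathlib

open MeasureTheory ProbabilityTheory

/-- Three-candidate model, voter `v ∈ P₁`, normalized scoring
rule `(s₁, s₂, 0)`.  The per-neighbor contribution `X` to the estimated score
difference `ŝ_v(a₁) - ŝ_v(a₂)` takes value `(s₁-s₂)/p̂` w.p. `p/6`; values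
`-(s₁-s₂)/q̂, s₁/q̂, -s₁/q̂, s₂/q̂, -s₂/q̂` each w.p. `q/6`; and `0` otherwise.
Then `E[X] = (s₁-s₂)(p/(6p̂) - q/(6q̂))`; under MEE `p/p̂ ≥ q/q̂`, `E[X] ≥ 0`. -/
theorem three_candidates_P1_mean
    {Ω : Type*} [MeasurableSpace Ω] (μ : Measure Ω) [IsProbabilityMeasure μ]
    (p phat q qhat s1 s2 : ℝ)
    (hp : 0 < p) (hp' : p ≤ 1) (hq : 0 < q) (hq' : q ≤ 1)
    (hphat : 0 < phat) (hphat' : phat ≤ 1) (hqhat : 0 < qhat) (hqhat' : qhat ≤ 1)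
    (hs1 : s2 ≤ s1) (hs2 : 0 ≤ s2) (hsum : s1 + s2 = 1)
    (K : Ω → Fin 7) (hK : Measurable K)
    (h0 : μ (K ⁻¹' {0}) = ENNReal.ofReal (p/6))
    (h1 : μ (K ⁻¹' {1}) = ENNReal.ofReal (q/6))
    (h2 : μ (K ⁻¹' {2}) = ENNReal.ofReal (q/6))
    (h3 : μ (K ⁻¹' {3}) = ENNReal.ofReal (q/6))
    (h4 : μ (K ⁻¹' {4}) = ENNReal.ofReal (q/6))
    (h5 : μ (K ⁻¹' {5}) = ENNReal.ofReal (q/6))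
    (X : Ω → ℝ)
    (hX : X = fun ω =>
      if K ω = 0 then (s1 - s2)/phat
      else if K ω = 1 then -(s1 - s2)/qhat
      else if K ω = 2 then s1/qhat
      else if K ω = 3 then -s1/qhat
      else if K ω = 4 then s2/qhat
      else if K ω = 5 then -s2/qhat
      else 0) :
    (∫ ω, X ω ∂μ = (s1 - s2) * (p/(6*phat) - q/(6*qhat))) ∧
    (p/phat ≥ q/qhat → 0 ≤ ∫ ω, X ω ∂μ) := by
  set c : Fin 7 → ℝ := fun i =>
    if i = 0 then (s1 - s2)/phat
    else if i = 1 then -(s1 - s2)/qhat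
    else if i = 2 then s1/qhat
    else if i = 3 then -s1/qhat
    else if i = 4 then s2/qhat
    else if i = 5 then -s2/qhat
    else 0 with hc
  have hXc : X = fun ω => c (K ω) := by rw [hX]
  have hmap : ∀ i : Fin 7, (μ.map K) {i} = μ (K ⁻¹' {i}) := fun i =>
    Measure.map_apply hK (measurableSet_singleton i)
  have hint : ∫ ω, X ω ∂μ = ∑ i : Fin 7, ((μ.map K) {i}).toReal • c i := by
    rw [hXc, ← integral_map hK.aemeasurable
      (f := c) (by exact (measurable_of_countable c).aestronglyMeasurable)]
    exact integral_fintype .of_finite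
  have e0 : c 0 = (s1 - s2)/phat := rfl
  have e1 : c 1 = -(s1 - s2)/qhat := rfl
  have e2 : c 2 = s1/qhat := rfl
  have e3 : c 3 = -s1/qhat := rfl
  have e4 : c 4 = s2/qhat := rfl
  have e5 : c 5 = -s2/qhat := rfl
  have e6 : c 6 = 0 := rfl
  have h6 : ((μ.map K) {6}).toReal • c 6 = 0 := by rw [e6]; simp
  have key : ∫ ω, X ω ∂μ = (s1 - s2) * (p/(6*phat) - q/(6*qhat)) := by
    rw [hint, Fin.sum_univ_seven, h6, hmap 0, hmap 1, hmap 2, hmap 3, hmap 4, hmap 5,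
      h0, h1, h2, h3, h4, h5,
      ENNReal.toReal_ofReal (by positivity), ENNReal.toReal_ofReal (by positivity)]
    rw [e0, e1, e2, e3, e4, e5]
    simp only [smul_eq_mul]
    field_simp
    ring
  refine ⟨key, fun hmee => ?_⟩
  rw [key]
  have h1' : 0 ≤ s1 - s2 := by linarith
  have h2' : 0 ≤ p/(6*phat) - q/(6*qhat) := by
    have : q/qhat ≤ p/phat := hmee
    have e1 : p/(6*phat) = (p/phat)/6 := by ring
    have e2 : q/(6*qhat) = (q/qhat)/6 := by ring
    rw [e1, e2]
    linarith
  positivity
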